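/- Let $w$ be a weight, $N>1$, $l\geq 1$, $\varepsilon_1\in(0,1)$ with $\varepsilon_1 N^l = 1/2$, $\delta>0$, and let $g, F\geq 0$ be measurable functions on a set $\Omega$ with $w(\Omega)<\infty$. Suppose that for all $k\geq 1$: $w(\{x\in\Omega: g(x)>N^k\}) \leq \varepsilon_1^k\, w(\{x\in\Omega: g(x)>1\}) + \sum_{i=1}^k \varepsilon_1^i\, w(\{x\in\Omega: F(x)>\delta N^{k-i}\})$. Then there is a constant $C$ depending only on $N$, $l$, and $\delta$ such that $\int_\Omega g^l\,dw \leq C\big(w(\Omega) + \int_\Omega F^l\,dw\big)$. -/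

import Mathlib

open MeasureTheory
open scoped ENNReal


private lemma aux_geom : (∑' d : ℕ, (2⁻¹ : ℝ≥0∞) ^ (d + 1)) = 1 := by
  have h1 : (∑' d : ℕ, (2⁻¹ : ℝ≥0∞) ^ (d + 1)) = 2⁻¹ * ∑' d : ℕ, (2⁻¹ : ℝ≥0∞) ^ d := by
    rw [← ENNReal.tsum_mul_left]
    exact tsum_congr fun d => (pow_succ' _ _)
  rw [h1, ENNReal.tsum_geometric, ENNReal.one_sub_inv_two, inv_inv]
  exact ENNReal.inv_mul_cancel two_ne_zero ENNReal.ofNat_ne_top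

private lemma aux_swap (U : ℕ → ℝ≥0∞) :
    (∑' k : ℕ, ∑ j ∈ Finset.range (k + 1), (2⁻¹ : ℝ≥0∞) ^ (k + 1 - j) * U j)
      = ∑' j : ℕ, U j := by
  have h1 : ∀ k : ℕ, (∑ j ∈ Finset.range (k + 1), (2⁻¹ : ℝ≥0∞) ^ (k + 1 - j) * U j)
      = ∑' j : ℕ, (if j ≤ k then (2⁻¹ : ℝ≥0∞) ^ (k + 1 - j) * U j else 0) := by
    intro k
    rw [tsum_eq_sum (s := Finset.range (k + 1)) (fun j hj => by
      rw [if_neg]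
      simp only [Finset.mem_range, not_lt] at hj
      omega)]
    exact Finset.sum_congr rfl fun j hj =>
      (if_pos (by simpa [Nat.lt_succ_iff] using hj)).symm
  calc (∑' k : ℕ, ∑ j ∈ Finset.range (k + 1), (2⁻¹ : ℝ≥0∞) ^ (k + 1 - j) * U j)
      = ∑' k : ℕ, ∑' j : ℕ, (if j ≤ k then (2⁻¹ : ℝ≥0∞) ^ (k + 1 - j) * U j else 0) :=
        tsum_congr h1
    _ = ∑' j : ℕ, ∑' k : ℕ, (if j ≤ k then (2⁻¹ : ℝ≥0∞) ^ (k + 1 - j) * U j else 0) :=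
        ENNReal.tsum_comm
    _ = ∑' j : ℕ, U j := by
        refine tsum_congr fun j => ?_
        have hinj : Function.Injective (fun d : ℕ => d + j) := add_left_injective j
        have hsupp : Function.support
              (fun k : ℕ => if j ≤ k then (2⁻¹ : ℝ≥0∞) ^ (k + 1 - j) * U j else 0)
            ⊆ Set.range (fun d : ℕ => d + j) := by
          intro k hk
          simp only [Function.mem_support] at hk
          by_cases hjk : j ≤ k
          · exact ⟨k - j, by simp only []; omega⟩
          · exact absurd (if_neg hjk) hk
        calc (∑' k : ℕ, if j ≤ k then (2⁻¹ : ℝ≥0∞) ^ (k + 1 - j) * U j else 0)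
            = ∑' d : ℕ, (if j ≤ d + j then (2⁻¹ : ℝ≥0∞) ^ (d + j + 1 - j) * U j else 0) :=
              (hinj.tsum_eq hsupp).symm
          _ = ∑' d : ℕ, (2⁻¹ : ℝ≥0∞) ^ (d + 1) * U j := by
              refine tsum_congr fun d => ?_
              rw [if_pos (by omega)]
              congr 2
              omega
          _ = (∑' d : ℕ, (2⁻¹ : ℝ≥0∞) ^ (d + 1)) * U j := ENNReal.tsum_mul_right
          _ = U j := by rw [aux_geom, one_mul]

/-- Iteration lemma: if the superlevel sets of `g` satisfy the geometric decay
`μ({g > N^k}) ≤ ε₁^k μ({g > 1}) + ∑_{i=1}^k ε₁^i μ({F > δ N^{k-i}})` with `ε₁ N^l = 1/2`,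
then `∫_Ω g^l dμ ≤ C (μ(Ω) + ∫_Ω F^l dμ)` for a constant `C = C(N, l, δ)`. -/
theorem stmt_14 (N l δ ε₁ : ℝ) (hN : 1 < N) (hl : 1 ≤ l) (hδ : 0 < δ)
    (hε₁ : 0 < ε₁) (hε₁' : ε₁ < 1) (hε₁N : ε₁ * N ^ l = 1 / 2) :
    ∃ C : ℝ, 0 < C ∧
      ∀ (α : Type) (_ : MeasurableSpace α) (μ : Measure α)
        (Ω : Set α) (_ : MeasurableSet Ω) (_ : μ Ω < ⊤)
        (g F : α → ℝ) (_ : Measurable g) (_ : ∀ x, 0 ≤ g x)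
        (_ : Measurable F) (_ : ∀ x, 0 ≤ F x),
        (∀ k : ℕ, 1 ≤ k →
          μ {x ∈ Ω | N ^ (k : ℝ) < g x} ≤
            ENNReal.ofReal (ε₁ ^ k) * μ {x ∈ Ω | 1 < g x} +
              ∑ i ∈ Finset.Icc 1 k, ENNReal.ofReal (ε₁ ^ i) *
                μ {x ∈ Ω | δ * N ^ ((k - i : ℕ) : ℝ) < F x}) →
        (∫⁻ x in Ω, ENNReal.ofReal (g x ^ l) ∂μ) ≤
          ENNReal.ofReal C * (μ Ω + ∫⁻ x in Ω, ENNReal.ofReal (F x ^ l) ∂μ) := by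
  classical
  have hN0 : (0:ℝ) < N := lt_trans one_pos hN
  have hl0 : (0:ℝ) < l := lt_of_lt_of_le one_pos hl
  have hr1 : 1 < N ^ l := by
    have h := Real.rpow_le_rpow_of_exponent_le hN.le hl
    rw [Real.rpow_one] at h
    linarith
  set r : ℝ := N ^ l with hr_def
  have hr0 : (0:ℝ) < r := by linarith
  have hδl : (0:ℝ) < δ ^ l := Real.rpow_pos_of_pos hδ l
  have hden : (0:ℝ) < (r - 1) * δ ^ l := mul_pos (by linarith) hδl
  set K : ℝ := r / ((r - 1) * δ ^ l) with hK_def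
  have hK0 : 0 < K := div_pos hr0 hden
  refine ⟨2 * r + r * K, by nlinarith, ?_⟩
  intro α mα μ Ω hΩ hΩfin g F hg hg0 hF hF0 hyp
  set R : ℝ≥0∞ := ENNReal.ofReal r with hR_def
  have hRpow : ∀ k : ℕ, R ^ k = ENNReal.ofReal (r ^ k) := fun k =>
    (ENNReal.ofReal_pow hr0.le k).symm
  have hpowNat : ∀ k : ℕ, N ^ ((k : ℕ) : ℝ) = N ^ k := fun k => Real.rpow_natCast N k
  have hpow : ∀ k : ℕ, ((N : ℝ) ^ k) ^ l = r ^ k := by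
    intro k
    rw [← Real.rpow_natCast N k, ← Real.rpow_mul hN0.le, mul_comm, Real.rpow_mul hN0.le,
      Real.rpow_natCast, hr_def]
  -- the superlevel sets
  set G : ℕ → Set α := fun k => {y | N ^ ((k : ℕ) : ℝ) < g y} with hG_def
  set S : ℕ → Set α := fun j => {y | δ * N ^ ((j : ℕ) : ℝ) < F y} with hS_def
  have hGm : ∀ k, MeasurableSet (G k) := fun k => measurableSet_lt measurable_const hg
  have hSm : ∀ j, MeasurableSet (S j) := fun j => measurableSet_lt measurable_const hF
  -- Step A: layer cake decomposition
  have stepA : (∫⁻ x in Ω, ENNReal.ofReal (g x ^ l) ∂μ) ≤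
      R * μ Ω + ∑' k : ℕ, R ^ (k + 2) * μ {x ∈ Ω | N ^ (((k+1 : ℕ)) : ℝ) < g x} := by
    have key : ∀ x : α, ENNReal.ofReal (g x ^ l) ≤
        (fun _ : α => R) x + ∑' k : ℕ, (G (k+1)).indicator (fun _ => R ^ (k+2)) x := by
      intro x
      by_cases h : g x ≤ N
      · refine le_trans ?_ le_self_add
        refine ENNReal.ofReal_le_ofReal ?_
        rw [hr_def]
        exact Real.rpow_le_rpow (hg0 x) h hl0.le
      · push_neg at h
        obtain ⟨B, hB⟩ := pow_unbounded_of_one_lt (g x) hN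
        set P : ℕ → Prop := fun j => N ^ j < g x with hP
        have hP1 : P 1 := by simpa [hP, pow_one] using h
        have hPB1 : ¬ P (B+1) := by
          simp only [hP, not_lt]
          exact le_trans hB.le (pow_le_pow_right₀ hN.le (Nat.le_succ B))
        set m : ℕ := Nat.findGreatest P (B+1) with hm
        have hm1 : 1 ≤ m := Nat.le_findGreatest (by omega) hP1
        have hPm : P m := Nat.findGreatest_spec (show 1 ≤ B+1 by omega) hP1
        have hmB : m ≤ B := by
          have h1 : m ≤ B + 1 := Nat.findGreatest_le (B+1)
          rcases eq_or_lt_of_le h1 with he | hlt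
          · exact absurd (he ▸ hPm) hPB1
          · omega
        have hnot : ¬ P (m+1) := Nat.findGreatest_is_greatest (Nat.lt_succ_self m) (by omega)
        have hle : g x ≤ N ^ (m+1) := not_lt.1 hnot
        have hgl : ENNReal.ofReal (g x ^ l) ≤ R ^ (m+1) := by
          rw [hRpow]
          refine ENNReal.ofReal_le_ofReal ?_
          rw [← hpow]
          exact Real.rpow_le_rpow (hg0 x) hle hl0.le
        have hxm : x ∈ G ((m-1)+1) := by
          have hmm : (m-1)+1 = m := by omega
          rw [hmm]
          simp only [hG_def, Set.mem_setOf_eq, hpowNat]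
          exact hPm
        calc ENNReal.ofReal (g x ^ l) ≤ R ^ (m+1) := hgl
          _ = (G ((m-1)+1)).indicator (fun _ => R ^ ((m-1)+2)) x := by
              rw [Set.indicator_of_mem hxm]
              congr 1
              omega
          _ ≤ ∑' k : ℕ, (G (k+1)).indicator (fun _ => R ^ (k+2)) x := ENNReal.le_tsum (m-1)
          _ ≤ _ := le_add_self
    have hinter : ∀ k : ℕ, G k ∩ Ω = {x ∈ Ω | N ^ ((k : ℕ) : ℝ) < g x} := by
      intro k
      rw [Set.inter_comm]
      rfl
    calc (∫⁻ x in Ω, ENNReal.ofReal (g x ^ l) ∂μ)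
        ≤ ∫⁻ x in Ω, ((fun _ : α => R) x
            + ∑' k : ℕ, (G (k+1)).indicator (fun _ => R ^ (k+2)) x) ∂μ :=
          lintegral_mono key
      _ = R * μ Ω + ∑' k : ℕ, R ^ (k + 2) * μ {x ∈ Ω | N ^ (((k+1 : ℕ)) : ℝ) < g x} := by
          rw [lintegral_add_left measurable_const, setLIntegral_const,
            lintegral_tsum (fun k => ((measurable_const.indicator (hGm (k+1))).aemeasurable))]
          congr 1
          · refine tsum_congr fun k => ?_
            rw [lintegral_indicator_const (hGm (k+1)), Measure.restrict_apply (hGm (k+1)),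
              hinter (k+1)]
  -- Step E: reverse layer cake for F
  have stepE : (∑' j : ℕ, R ^ j * μ {x ∈ Ω | δ * N ^ ((j : ℕ) : ℝ) < F x}) ≤
      ENNReal.ofReal K * ∫⁻ x in Ω, ENNReal.ofReal (F x ^ l) ∂μ := by
    have hinterS : ∀ j : ℕ, S j ∩ Ω = {x ∈ Ω | δ * N ^ ((j : ℕ) : ℝ) < F x} := by
      intro j
      rw [Set.inter_comm]
      rfl
    have key : ∀ x : α, (∑' j : ℕ, (S j).indicator (fun _ => R ^ j) x) ≤
        ENNReal.ofReal K * ENNReal.ofReal (F x ^ l) := by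
      intro x
      by_cases h : F x ≤ δ
      · have hz : ∀ j : ℕ, (S j).indicator (fun _ : α => R ^ j) x = 0 := by
          intro j
          refine Set.indicator_of_notMem ?_ _
          simp only [hS_def, Set.mem_setOf_eq, not_lt, hpowNat]
          have h1 : (1:ℝ) ≤ N ^ j := one_le_pow₀ hN.le
          nlinarith
        simp only [hz, tsum_zero]
        exact zero_le
      · push_neg at h
        obtain ⟨B, hB⟩ := pow_unbounded_of_one_lt (F x / δ) hN
        set P : ℕ → Prop := fun j => δ * N ^ j < F x with hP
        have hP0 : P 0 := by simpa [hP] using h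
        set m := Nat.findGreatest P B with hm
        have hPm : P m := Nat.findGreatest_spec (Nat.zero_le B) hP0
        have hnot : ∀ j, m < j → ¬ P j := by
          intro j hj
          by_cases hjB : j ≤ B
          · exact Nat.findGreatest_is_greatest hj hjB
          · push_neg at hjB
            simp only [hP, not_lt]
            have h2 : (N:ℝ) ^ B ≤ N ^ j := pow_le_pow_right₀ hN.le (by omega)
            have h3 := (div_lt_iff₀ hδ).1 (lt_of_lt_of_le hB h2)
            linarith
        have hsum : (∑' j : ℕ, (S j).indicator (fun _ : α => R ^ j) x)
            = ∑ j ∈ Finset.range (m+1), (S j).indicator (fun _ : α => R ^ j) x := by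
          refine tsum_eq_sum ?_
          intro j hj
          simp only [Finset.mem_range, not_lt] at hj
          refine Set.indicator_of_notMem ?_ _
          simp only [hS_def, Set.mem_setOf_eq, hpowNat]
          simpa [hP] using hnot j (by omega)
        have hmem : ∀ j ∈ Finset.range (m+1), (S j).indicator (fun _ : α => R ^ j) x = R ^ j := by
          intro j hj
          simp only [Finset.mem_range] at hj
          refine Set.indicator_of_mem ?_ _
          simp only [hS_def, Set.mem_setOf_eq, hpowNat]
          have h2 : (N:ℝ) ^ j ≤ N ^ m := pow_le_pow_right₀ hN.le (by omega)
          have h3 : δ * N ^ j ≤ δ * N ^ m := by nlinarith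
          exact lt_of_le_of_lt h3 hPm
        have hreal : (∑ j ∈ Finset.range (m+1), r ^ j) ≤ K * F x ^ l := by
          have hgeom : (∑ j ∈ Finset.range (m+1), r ^ j) = (r ^ (m+1) - 1)/(r - 1) :=
            geom_sum_eq (ne_of_gt hr1) (m+1)
          have hNm : (N:ℝ) ^ m < F x / δ := (lt_div_iff₀ hδ).2 (by linarith [hPm])
          have hrm : r ^ m ≤ (F x / δ) ^ l := by
            rw [← hpow m]
            exact Real.rpow_le_rpow (by positivity) hNm.le hl0.le
          have hdiv : (F x / δ) ^ l = F x ^ l / δ ^ l := Real.div_rpow (hF0 x) hδ.le l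
          rw [hdiv] at hrm
          have hr1' : (0:ℝ) < r - 1 := by linarith
          have e2 : r ^ (m+1) ≤ r * (F x ^ l / δ ^ l) := by
            rw [pow_succ]
            nlinarith
          calc (∑ j ∈ Finset.range (m+1), r ^ j) = (r ^ (m+1) - 1)/(r - 1) := hgeom
            _ ≤ (r * (F x ^ l / δ ^ l))/(r - 1) := by
                apply div_le_div_of_nonneg_right ?_ hr1'.le
                linarith
            _ = K * F x ^ l := by
                rw [hK_def]
                have h2 : r - 1 ≠ 0 := by linarith
                have h3 : δ ^ l ≠ 0 := ne_of_gt hδl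
                field_simp
        rw [hsum, Finset.sum_congr rfl hmem]
        calc (∑ j ∈ Finset.range (m+1), R ^ j)
            = ENNReal.ofReal (∑ j ∈ Finset.range (m+1), r ^ j) := by
              rw [ENNReal.ofReal_sum_of_nonneg (fun j _ => pow_nonneg hr0.le j)]
              exact Finset.sum_congr rfl fun j _ => hRpow j
          _ ≤ ENNReal.ofReal (K * F x ^ l) := ENNReal.ofReal_le_ofReal hreal
          _ = ENNReal.ofReal K * ENNReal.ofReal (F x ^ l) := ENNReal.ofReal_mul hK0.le
    calc (∑' j : ℕ, R ^ j * μ {x ∈ Ω | δ * N ^ ((j : ℕ) : ℝ) < F x})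
        = ∑' j : ℕ, ∫⁻ x in Ω, (S j).indicator (fun _ => R ^ j) x ∂μ := by
          refine tsum_congr fun j => ?_
          rw [lintegral_indicator_const (hSm j), Measure.restrict_apply (hSm j), hinterS j]
      _ = ∫⁻ x in Ω, (∑' j : ℕ, (S j).indicator (fun _ => R ^ j) x) ∂μ :=
          (lintegral_tsum fun j => (measurable_const.indicator (hSm j)).aemeasurable).symm
      _ ≤ ∫⁻ x in Ω, ENNReal.ofReal K * ENNReal.ofReal (F x ^ l) ∂μ :=
          lintegral_mono fun x => key x
      _ = ENNReal.ofReal K * ∫⁻ x in Ω, ENNReal.ofReal (F x ^ l) ∂μ :=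
          lintegral_const_mul' _ _ ENNReal.ofReal_ne_top
  -- Step B/C/D: apply the hypothesis and sum the series
  have stepB : (∑' k : ℕ, R ^ (k + 2) * μ {x ∈ Ω | N ^ (((k+1 : ℕ)) : ℝ) < g x}) ≤
      R * μ Ω + R * ∑' j : ℕ, R ^ j * μ {x ∈ Ω | δ * N ^ ((j : ℕ) : ℝ) < F x} := by
    have hRE : R * ENNReal.ofReal ε₁ = 2⁻¹ := by
      rw [hR_def, ← ENNReal.ofReal_mul hr0.le, mul_comm r ε₁, hε₁N, one_div,
        ENNReal.ofReal_inv_of_pos (by norm_num : (0:ℝ) < 2)]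
      norm_num
    have c1 : ∀ k : ℕ, R ^ (k+2) * ENNReal.ofReal (ε₁ ^ (k+1)) = R * 2⁻¹ ^ (k+1) := by
      intro k
      rw [ENNReal.ofReal_pow hε₁.le]
      calc R ^ (k+2) * ENNReal.ofReal ε₁ ^ (k+1)
          = R * ((R * ENNReal.ofReal ε₁) ^ (k+1)) := by rw [mul_pow]; ring
        _ = R * 2⁻¹ ^ (k+1) := by rw [hRE]
    have c2 : ∀ k i : ℕ, i ≤ k + 1 → R ^ (k+2) * ENNReal.ofReal (ε₁ ^ i)
        = R * (2⁻¹ ^ i * R ^ (k+1-i)) := by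
      intro k i hi
      rw [ENNReal.ofReal_pow hε₁.le]
      have hik : i + (k+1-i) = k+1 := by omega
      calc R ^ (k+2) * ENNReal.ofReal ε₁ ^ i
          = R * (R ^ (k+1) * ENNReal.ofReal ε₁ ^ i) := by ring
        _ = R * (R ^ i * R ^ (k+1-i) * ENNReal.ofReal ε₁ ^ i) := by rw [← pow_add, hik]
        _ = R * ((R * ENNReal.ofReal ε₁) ^ i * R ^ (k+1-i)) := by rw [mul_pow]; ring
        _ = R * (2⁻¹ ^ i * R ^ (k+1-i)) := by rw [hRE]
    have hk_bound : ∀ k : ℕ, R ^ (k+2) * μ {x ∈ Ω | N ^ (((k+1:ℕ)):ℝ) < g x}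
        ≤ R * 2⁻¹ ^ (k+1) * μ {x ∈ Ω | 1 < g x}
          + ∑ j ∈ Finset.range (k+1),
              R * (2⁻¹ ^ (k+1-j) * (R ^ j * μ {x ∈ Ω | δ * N ^ ((j:ℕ):ℝ) < F x})) := by
      intro k
      have h := hyp (k+1) (by omega)
      have h2 := mul_le_mul_right h (R ^ (k+2))
      rw [mul_add, Finset.mul_sum] at h2
      refine h2.trans (le_of_eq ?_)
      congr 1
      · rw [← mul_assoc, c1 k]
      · refine Finset.sum_nbij' (fun i => k+1-i) (fun j => k+1-j) ?_ ?_ ?_ ?_ ?_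
        · intro a ha
          simp only [Finset.mem_Icc] at ha
          simp only [Finset.mem_range]
          omega
        · intro a ha
          simp only [Finset.mem_range] at ha
          simp only [Finset.mem_Icc]
          omega
        · intro a ha
          simp only [Finset.mem_Icc] at ha
          omega
        · intro a ha
          simp only [Finset.mem_range] at ha
          omega
        · intro i hi
          simp only [Finset.mem_Icc] at hi
          have he : k + 1 - (k + 1 - i) = i := by omega
          rw [he, ← mul_assoc, c2 k i hi.2]
          ring
    calc (∑' k : ℕ, R ^ (k + 2) * μ {x ∈ Ω | N ^ (((k+1 : ℕ)) : ℝ) < g x})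
        ≤ ∑' k : ℕ, (R * 2⁻¹ ^ (k+1) * μ {x ∈ Ω | 1 < g x}
            + ∑ j ∈ Finset.range (k+1),
                R * (2⁻¹ ^ (k+1-j) * (R ^ j * μ {x ∈ Ω | δ * N ^ ((j:ℕ):ℝ) < F x}))) :=
          ENNReal.tsum_le_tsum hk_bound
      _ = (∑' k : ℕ, R * 2⁻¹ ^ (k+1) * μ {x ∈ Ω | 1 < g x})
          + ∑' k : ℕ, ∑ j ∈ Finset.range (k+1),
              R * (2⁻¹ ^ (k+1-j) * (R ^ j * μ {x ∈ Ω | δ * N ^ ((j:ℕ):ℝ) < F x})) :=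
          ENNReal.tsum_add
      _ ≤ R * μ Ω + R * ∑' j : ℕ, R ^ j * μ {x ∈ Ω | δ * N ^ ((j : ℕ) : ℝ) < F x} := by
          refine add_le_add ?_ (le_of_eq ?_)
          · calc (∑' k : ℕ, R * 2⁻¹ ^ (k+1) * μ {x ∈ Ω | 1 < g x})
                = (R * μ {x ∈ Ω | 1 < g x}) * ∑' k : ℕ, (2⁻¹:ℝ≥0∞) ^ (k+1) := by
                  rw [← ENNReal.tsum_mul_left]
                  exact tsum_congr fun k => by ring
              _ = R * μ {x ∈ Ω | 1 < g x} := by rw [aux_geom, mul_one]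
              _ ≤ R * μ Ω := mul_le_mul_right (measure_mono fun x hx => hx.1) R
          · calc (∑' k : ℕ, ∑ j ∈ Finset.range (k+1),
                    R * (2⁻¹ ^ (k+1-j) * (R ^ j * μ {x ∈ Ω | δ * N ^ ((j:ℕ):ℝ) < F x})))
                = ∑' k : ℕ, R * ∑ j ∈ Finset.range (k+1),
                    2⁻¹ ^ (k+1-j) * (R ^ j * μ {x ∈ Ω | δ * N ^ ((j:ℕ):ℝ) < F x}) :=
                  tsum_congr fun k => by rw [Finset.mul_sum]
              _ = R * ∑' k : ℕ, ∑ j ∈ Finset.range (k+1),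
                    2⁻¹ ^ (k+1-j) * (R ^ j * μ {x ∈ Ω | δ * N ^ ((j:ℕ):ℝ) < F x}) :=
                  ENNReal.tsum_mul_left
              _ = R * ∑' j : ℕ, R ^ j * μ {x ∈ Ω | δ * N ^ ((j : ℕ) : ℝ) < F x} := by
                  congr 1
                  exact aux_swap (fun j => R ^ j * μ {x ∈ Ω | δ * N ^ ((j:ℕ):ℝ) < F x})
  set J := ∫⁻ x in Ω, ENNReal.ofReal (F x ^ l) ∂μ with hJ
  calc (∫⁻ x in Ω, ENNReal.ofReal (g x ^ l) ∂μ)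
      ≤ R * μ Ω + ∑' k : ℕ, R ^ (k + 2) * μ {x ∈ Ω | N ^ (((k+1 : ℕ)) : ℝ) < g x} := stepA
    _ ≤ R * μ Ω + (R * μ Ω + R * (ENNReal.ofReal K * J)) := by
        refine add_le_add_right (stepB.trans (add_le_add_right ?_ _)) _
        exact mul_le_mul_right stepE R
    _ = ENNReal.ofReal (2 * r) * μ Ω + ENNReal.ofReal (r * K) * J := by
        rw [ENNReal.ofReal_mul (by norm_num : (0:ℝ) ≤ 2), ENNReal.ofReal_mul hr0.le,
          ENNReal.ofReal_ofNat]
        ring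
    _ ≤ ENNReal.ofReal (2 * r + r * K) * μ Ω + ENNReal.ofReal (2 * r + r * K) * J := by
        have h1 : ENNReal.ofReal (2 * r) ≤ ENNReal.ofReal (2 * r + r * K) :=
          ENNReal.ofReal_le_ofReal (by nlinarith)
        have h2 : ENNReal.ofReal (r * K) ≤ ENNReal.ofReal (2 * r + r * K) :=
          ENNReal.ofReal_le_ofReal (by nlinarith)
        exact add_le_add (mul_le_mul_left h1 _) (mul_le_mul_left h2 _)
    _ = ENNReal.ofReal (2 * r + r * K) * (μ Ω + J) := (mul_add _ _ _).symm
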